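/- Let r ∈ ℝ with r ≠ 0. There is a 5-dimensional real Lie algebra 𝔤 with basis e₁,...,e₅ and dual basis e¹,...,e⁵ whose Chevalley–Eilenberg differentials satisfy (writing e^{ij} for eⁱ∧eʲ): de¹ = 0, de² = r e^{12}, de³ = r e^{13}, de⁴ = −r e^{14} − 3r² e^{15} + 2r e^{23}, de⁵ = −2e^{14} − 2e^{23} (i.e., the bracket determined by these equations satisfies the Jacobi identity). Moreover, 𝔤 is solvable, the quadruplet η = e⁵, ω₁ = e^{12} + e^{34}, ω₂ = e^{13} − e^{24}, ω₃ = e^{14} + e^{23} is a hypo-contact structure on 𝔤, and 𝔤 is isomorphic to 𝔥₂. -/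

import Mathlib

noncomputable section

/-- Chevalley–Eilenberg differential of a 1-form on a Lie algebra. -/
def dOne {V : Type*} [LieRing V] [LieAlgebra ℝ V] (α : V → ℝ) (x y : V) : ℝ :=
  -α ⁅x, y⁆

/-- Chevalley–Eilenberg differential of a 2-form on a Lie algebra. -/
def dTwo {V : Type*} [LieRing V] [LieAlgebra ℝ V] (ω : V → V → ℝ) (x y z : V) : ℝ :=
  -ω ⁅x, y⁆ z + ω ⁅x, z⁆ y - ω ⁅y, z⁆ x

/-- Chevalley–Eilenberg differential of a 3-form on a Lie algebra. -/
def dThree {V : Type*} [LieRing V] [LieAlgebra ℝ V] (σ : V → V → V → ℝ)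
    (x y z w : V) : ℝ :=
  -σ ⁅x, y⁆ z w + σ ⁅x, z⁆ y w - σ ⁅x, w⁆ y z
    - σ ⁅y, z⁆ x w + σ ⁅y, w⁆ x z - σ ⁅z, w⁆ x y

/-- Wedge product of two 1-forms, as an alternating bilinear map. -/
def wedge1 {V : Type*} [LieRing V] [LieAlgebra ℝ V] (α β : V →ₗ[ℝ] ℝ) :
    V →ₗ[ℝ] V →ₗ[ℝ] ℝ :=
  LinearMap.mk₂ ℝ (fun x y => α x * β y - α y * β x)
    (fun m₁ m₂ n => by simp [map_add]; ring)
    (fun c m n => by simp [map_smul, smul_eq_mul]; ring)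
    (fun m n₁ n₂ => by simp [map_add]; ring)
    (fun c m n => by simp [map_smul, smul_eq_mul]; ring)

/-- Wedge product of a 1-form and a 2-form. -/
def wedge12 {V : Type*} (α : V → ℝ) (ω : V → V → ℝ) (x y z : V) : ℝ :=
  α x * ω y z - α y * ω x z + α z * ω x y

/-- Wedge product of two 2-forms. -/
def wedge22 {V : Type*} (ω τ : V → V → ℝ) (x y z w : V) : ℝ :=
  ω x y * τ z w - ω x z * τ y w + ω x w * τ y z
    + ω y z * τ x w - ω y w * τ x z + ω z w * τ x y

/-- Wedge product of a 4-form and a 1-form. -/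
def wedge41 {V : Type*} (v : V → V → V → V → ℝ) (α : V → ℝ)
    (x₀ x₁ x₂ x₃ x₄ : V) : ℝ :=
  α x₀ * v x₁ x₂ x₃ x₄ - α x₁ * v x₀ x₂ x₃ x₄ + α x₂ * v x₀ x₁ x₃ x₄
    - α x₃ * v x₀ x₁ x₂ x₄ + α x₄ * v x₀ x₁ x₂ x₃

/-- An SU(2)-structure on a 5-dimensional real Lie algebra. -/
structure IsSU2Structure {V : Type*} [LieRing V] [LieAlgebra ℝ V]
    (η : V →ₗ[ℝ] ℝ) (ω₁ ω₂ ω₃ : V →ₗ[ℝ] V →ₗ[ℝ] ℝ) : Prop where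
  alt1 : ∀ x, ω₁ x x = 0
  alt2 : ∀ x, ω₂ x x = 0
  alt3 : ∀ x, ω₃ x x = 0
  vol : ∃ v : V → V → V → V → ℝ,
    wedge22 (fun a b => ω₁ a b) (fun a b => ω₁ a b) = v ∧
    wedge22 (fun a b => ω₂ a b) (fun a b => ω₂ a b) = v ∧
    wedge22 (fun a b => ω₃ a b) (fun a b => ω₃ a b) = v ∧
    wedge22 (fun a b => ω₁ a b) (fun a b => ω₂ a b) = (fun _ _ _ _ => 0) ∧
    wedge22 (fun a b => ω₁ a b) (fun a b => ω₃ a b) = (fun _ _ _ _ => 0) ∧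
    wedge22 (fun a b => ω₂ a b) (fun a b => ω₃ a b) = (fun _ _ _ _ => 0) ∧
    wedge41 v (fun x => η x) ≠ (fun _ _ _ _ _ => 0)
  compat : ∀ X Y : V, (∀ z, ω₃ X z = ω₁ Y z) → 0 ≤ ω₂ X Y

/-- A hypo-contact structure on a 5-dimensional real Lie algebra. -/
structure IsHypoContact {V : Type*} [LieRing V] [LieAlgebra ℝ V]
    (η : V →ₗ[ℝ] ℝ) (ω₁ ω₂ ω₃ : V →ₗ[ℝ] V →ₗ[ℝ] ℝ)
    extends IsSU2Structure η ω₁ ω₂ ω₃ : Prop where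
  contact : ∀ x y, dOne (fun z => η z) x y = -2 * ω₃ x y
  closed1 : ∀ x y z w, dThree (wedge12 (fun z => η z) (fun a b => ω₁ a b)) x y z w = 0
  closed2 : ∀ x y z w, dThree (wedge12 (fun z => η z) (fun a b => ω₂ a b)) x y z w = 0

/-- The Lie algebra `𝔥₁`. -/
def IsH1 (V : Type*) [LieRing V] [LieAlgebra ℝ V] : Prop :=
  ∃ X : Module.Basis (Fin 5) ℝ V,
    ⁅X 0, X 1⁆ = 0 ∧ ⁅X 0, X 2⁆ = 0 ∧ ⁅X 0, X 3⁆ = X 4 ∧ ⁅X 0, X 4⁆ = 0 ∧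
    ⁅X 1, X 2⁆ = X 4 ∧ ⁅X 1, X 3⁆ = 0 ∧ ⁅X 1, X 4⁆ = 0 ∧
    ⁅X 2, X 3⁆ = 0 ∧ ⁅X 2, X 4⁆ = 0 ∧ ⁅X 3, X 4⁆ = 0

/-- The Lie algebra `𝔥₂`. -/
def IsH2 (V : Type*) [LieRing V] [LieAlgebra ℝ V] : Prop :=
  ∃ X : Module.Basis (Fin 5) ℝ V,
    ⁅X 0, X 1⁆ = 0 ∧ ⁅X 0, X 2⁆ = 0 ∧ ⁅X 0, X 3⁆ = 0 ∧ ⁅X 0, X 4⁆ = (2 : ℝ) • X 0 ∧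
    ⁅X 1, X 2⁆ = X 0 ∧ ⁅X 1, X 3⁆ = 0 ∧ ⁅X 1, X 4⁆ = X 1 ∧
    ⁅X 2, X 3⁆ = 0 ∧ ⁅X 2, X 4⁆ = X 2 ∧ ⁅X 3, X 4⁆ = (-3 : ℝ) • X 3

/-- The Lie algebra `𝔥₃`. -/
def IsH3 (V : Type*) [LieRing V] [LieAlgebra ℝ V] : Prop :=
  ∃ X : Module.Basis (Fin 5) ℝ V,
    ⁅X 0, X 1⁆ = 0 ∧ ⁅X 0, X 2⁆ = 0 ∧ ⁅X 0, X 3⁆ = (2 : ℝ) • X 0 ∧ ⁅X 0, X 4⁆ = 0 ∧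
    ⁅X 1, X 2⁆ = X 0 ∧ ⁅X 1, X 3⁆ = X 1 ∧ ⁅X 1, X 4⁆ = -X 2 ∧
    ⁅X 2, X 3⁆ = X 2 ∧ ⁅X 2, X 4⁆ = X 1 ∧ ⁅X 3, X 4⁆ = 0

/-- The Lie algebra `𝔥₄`. -/
def IsH4 (V : Type*) [LieRing V] [LieAlgebra ℝ V] : Prop :=
  ∃ X : Module.Basis (Fin 5) ℝ V,
    ⁅X 0, X 1⁆ = 0 ∧ ⁅X 0, X 2⁆ = 0 ∧ ⁅X 0, X 3⁆ = X 0 ∧ ⁅X 0, X 4⁆ = 0 ∧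
    ⁅X 1, X 2⁆ = 0 ∧ ⁅X 1, X 3⁆ = 0 ∧ ⁅X 1, X 4⁆ = X 1 ∧
    ⁅X 2, X 3⁆ = -X 2 ∧ ⁅X 2, X 4⁆ = -X 2 ∧ ⁅X 3, X 4⁆ = 0

/-- The Lie algebra `𝔥₅`. -/
def IsH5 (V : Type*) [LieRing V] [LieAlgebra ℝ V] : Prop :=
  ∃ X : Module.Basis (Fin 5) ℝ V,
    ⁅X 0, X 1⁆ = 0 ∧ ⁅X 0, X 2⁆ = 0 ∧ ⁅X 0, X 3⁆ = 0 ∧ ⁅X 0, X 4⁆ = X 0 ∧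
    ⁅X 1, X 2⁆ = 0 ∧ ⁅X 1, X 3⁆ = X 0 ∧ ⁅X 1, X 4⁆ = 0 ∧
    ⁅X 2, X 3⁆ = X 1 ∧ ⁅X 2, X 4⁆ = -X 2 ∧ ⁅X 3, X 4⁆ = X 3

/-- `e^{ij}`, the wedge of the `i`-th and `j`-th dual basis 1-forms. -/
def bw {V : Type*} [LieRing V] [LieAlgebra ℝ V] (e : Module.Basis (Fin 5) ℝ V) (i j : Fin 5) :
    V →ₗ[ℝ] V →ₗ[ℝ] ℝ :=
  wedge1 (e.coord i) (e.coord j)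

/-- The content of Statement 3: structure equations, solvability, hypo-contact structure
and the isomorphism type, for a Lie algebra `V`. -/
def GoodLieAlgebra3 (r : ℝ) (V : Type) [LieRing V] [LieAlgebra ℝ V] : Prop :=
  LieAlgebra.IsSolvable V ∧
  ∃ e : Module.Basis (Fin 5) ℝ V,
      (∀ x y : _, dOne (⇑(e.coord 0)) x y = 0) ∧
      (∀ x y : _, dOne (⇑(e.coord 1)) x y = (r) * bw e 0 1 x y) ∧
      (∀ x y : _, dOne (⇑(e.coord 2)) x y = (r) * bw e 0 2 x y) ∧
      (∀ x y : _, dOne (⇑(e.coord 3)) x y = (-r) * bw e 0 3 x y + (-3*r^2) * bw e 0 4 x y + (2*r) * bw e 1 2 x y) ∧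
      (∀ x y : _, dOne (⇑(e.coord 4)) x y = (-2) * bw e 0 3 x y + (-2) * bw e 1 2 x y) ∧
      IsHypoContact (e.coord 4) (bw e 0 1 + bw e 2 3) (bw e 0 2 - bw e 1 3) (bw e 0 3 + bw e 1 2) ∧
      IsH2 V

-- construction
abbrev L (_r : ℝ) : Type := Fin 5 → ℝ
variable (r : ℝ)
instance : AddCommGroup (L r) := inferInstanceAs (AddCommGroup (Fin 5 → ℝ))
instance : Module ℝ (L r) := inferInstanceAs (Module ℝ (Fin 5 → ℝ))
def br (x y : L r) : L r :=
  ![0,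
    -r * (x 0 * y 1 - x 1 * y 0),
    -r * (x 0 * y 2 - x 2 * y 0),
    r * (x 0 * y 3 - x 3 * y 0) + 3*r^2 * (x 0 * y 4 - x 4 * y 0) - 2*r*(x 1 * y 2 - x 2 * y 1),
    2 * (x 0 * y 3 - x 3 * y 0) + 2 * (x 1 * y 2 - x 2 * y 1)]
attribute [local simp] Matrix.cons_val_two Matrix.cons_val_three Matrix.cons_val_four
instance : LieRing (L r) :=
  { (inferInstance : AddCommGroup (L r)) with
    bracket := br r
    add_lie := by
      intro x y z; funext i
      fin_cases i <;>
        simp [br, show ∀ a b : L r, ∀ j, (a + b) j = a j + b j from fun _ _ _ => rfl] <;> ring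
    lie_add := by
      intro x y z; funext i
      fin_cases i <;>
        simp [br, show ∀ a b : L r, ∀ j, (a + b) j = a j + b j from fun _ _ _ => rfl] <;> ring
    lie_self := by
      intro x; funext i
      fin_cases i <;> simp [br, show ∀ j, (0 : L r) j = 0 from fun _ => rfl, mul_comm, sub_self]
    leibniz_lie := by
      intro x y z; funext i
      fin_cases i <;>
        simp [br, show ∀ a b : L r, ∀ j, (a + b) j = a j + b j from fun _ _ _ => rfl] <;> ring }
instance : LieAlgebra ℝ (L r) :=
  { lie_smul := by
      intro t x y; funext i
      fin_cases i <;>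
        simp [Bracket.bracket, br,
          show ∀ (t : ℝ) (a : L r) (j : Fin 5), (t • a) j = t * a j from fun _ _ _ => rfl] <;> ring }
lemma lie_def (x y : L r) : ⁅x, y⁆ = br r x y := rfl

def eb : Module.Basis (Fin 5) ℝ (L r) := Pi.basisFun ℝ (Fin 5)
lemma coord_apply (i : Fin 5) (x : L r) : (eb r).coord i x = x i := rfl
lemma repr_apply (i : Fin 5) (x : L r) : (eb r).repr x i = x i := rfl
lemma eb_apply (i j : Fin 5) : eb r i j = if j = i then 1 else 0 := by
  have h : (Pi.basisFun ℝ (Fin 5)) i = Pi.single i (1:ℝ) := Pi.basisFun_apply (R := ℝ) (η := Fin 5) i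
  have := congrFun h j
  rw [Pi.single_apply] at this
  exact this


lemma bw_apply (i j : Fin 5) (x y : L r) :
    bw (eb r) i j x y = x i * y j - y i * x j := by
  simp only [bw, wedge1, LinearMap.mk₂_apply, Module.Basis.coord_apply, repr_apply]

attribute [local simp] Matrix.cons_val_zero Matrix.cons_val_one Matrix.head_cons

lemma br_0 (x y : L r) : ⁅x, y⁆ 0 = 0 := rfl
lemma br_1 (x y : L r) : ⁅x, y⁆ 1 = -r * (x 0 * y 1 - x 1 * y 0) := rfl
lemma br_2 (x y : L r) : ⁅x, y⁆ 2 = -r * (x 0 * y 2 - x 2 * y 0) := rfl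
lemma br_3 (x y : L r) : ⁅x, y⁆ 3 =
    r * (x 0 * y 3 - x 3 * y 0) + 3*r^2 * (x 0 * y 4 - x 4 * y 0) - 2*r*(x 1 * y 2 - x 2 * y 1) := by
  show br r x y 3 = _; simp [br]
lemma br_4 (x y : L r) : ⁅x, y⁆ 4 = 2 * (x 0 * y 3 - x 3 * y 0) + 2 * (x 1 * y 2 - x 2 * y 1) := by
  show br r x y 4 = _; simp [br]

lemma om1_apply (x y : L r) : (bw (eb r) 0 1 + bw (eb r) 2 3) x y
    = x 0 * y 1 - y 0 * x 1 + (x 2 * y 3 - y 2 * x 3) := by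
  simp [bw_apply]
lemma om2_apply (x y : L r) : (bw (eb r) 0 2 - bw (eb r) 1 3) x y
    = x 0 * y 2 - y 0 * x 2 - (x 1 * y 3 - y 1 * x 3) := by
  simp [bw_apply]
lemma om3_apply (x y : L r) : (bw (eb r) 0 3 + bw (eb r) 1 2) x y
    = x 0 * y 3 - y 0 * x 3 + (x 1 * y 2 - y 1 * x 2) := by
  simp [bw_apply]

-- structure equations
-- solvability
def I1 : LieIdeal ℝ (L r) where
  carrier := {x : L r | x 0 = 0}
  add_mem' := by intro a b ha hb; show (a + b) 0 = 0; show a 0 + b 0 = 0; simp_all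
  zero_mem' := rfl
  smul_mem' := by intro c a ha; show (c • a) 0 = 0; show c * a 0 = 0; simp_all
  lie_mem := by intro x m _; exact br_0 r x m

def I2 : LieIdeal ℝ (L r) where
  carrier := {x : L r | x 0 = 0 ∧ x 1 = 0 ∧ x 2 = 0}
  add_mem' := by
    intro a b ha hb
    refine ⟨?_, ?_, ?_⟩ <;>
      [show a 0 + b 0 = 0; show a 1 + b 1 = 0; show a 2 + b 2 = 0] <;> simp_all
  zero_mem' := ⟨rfl, rfl, rfl⟩
  smul_mem' := by
    intro c a ha
    refine ⟨?_, ?_, ?_⟩ <;>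
      [show c * a 0 = 0; show c * a 1 = 0; show c * a 2 = 0] <;> simp_all
  lie_mem := by
    intro x m hm
    obtain ⟨h0, h1, h2⟩ := hm
    refine ⟨br_0 r x m, ?_, ?_⟩
    · rw [br_1, h0, h1]; ring
    · rw [br_2, h0, h2]; ring

lemma mem_I1 (x : L r) : x ∈ I1 r ↔ x 0 = 0 := Iff.rfl
lemma mem_I2 (x : L r) : x ∈ I2 r ↔ x 0 = 0 ∧ x 1 = 0 ∧ x 2 = 0 := Iff.rfl

lemma solv : LieAlgebra.IsSolvable (L r) := by
  refine (LieAlgebra.isSolvable_iff ℝ (L r)).mpr ⟨3, ?_⟩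
  have d1 : LieAlgebra.derivedSeries ℝ (L r) 1 ≤ I1 r := by
    rw [LieAlgebra.derivedSeries_def, LieAlgebra.derivedSeriesOfIdeal_succ,
      LieAlgebra.derivedSeriesOfIdeal_zero]
    rw [LieSubmodule.lie_le_iff]
    intro x _ m _
    exact br_0 r x m
  have d2 : LieAlgebra.derivedSeries ℝ (L r) 2 ≤ I2 r := by
    show LieAlgebra.derivedSeriesOfIdeal ℝ (L r) 2 ⊤ ≤ I2 r
    rw [LieAlgebra.derivedSeriesOfIdeal_succ, LieSubmodule.lie_le_iff]
    intro x hx m hm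
    have hx1 := d1 hx; have hm1 := d1 hm
    rw [mem_I1] at hx1 hm1
    refine ⟨br_0 r x m, ?_, ?_⟩
    · rw [br_1, hx1, hm1]; ring
    · rw [br_2, hx1, hm1]; ring
  have d3 : LieAlgebra.derivedSeries ℝ (L r) 3 ≤ ⊥ := by
    show LieAlgebra.derivedSeriesOfIdeal ℝ (L r) 3 ⊤ ≤ ⊥
    rw [LieAlgebra.derivedSeriesOfIdeal_succ, LieSubmodule.lie_le_iff]
    intro x hx m hm
    have hx2 := d2 hx; have hm2 := d2 hm
    rw [mem_I2] at hx2 hm2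
    obtain ⟨hx0, hx1, hx2'⟩ := hx2; obtain ⟨hm0, hm1, hm2'⟩ := hm2
    rw [LieSubmodule.mem_bot]
    funext i
    fin_cases i
    · show ⁅x, m⁆ 0 = (0:ℝ); exact br_0 r x m
    · show ⁅x, m⁆ 1 = (0:ℝ); rw [br_1, hx0, hm0]; ring
    · show ⁅x, m⁆ 2 = (0:ℝ); rw [br_2, hx0, hm0]; ring
    · show ⁅x, m⁆ 3 = (0:ℝ); rw [br_3, hx0, hm0, hx1, hm1]; ring
    · show ⁅x, m⁆ 4 = (0:ℝ); rw [br_4, hx0, hm0, hx1, hm1]; ring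
  exact le_bot_iff.mp d3

-- IsH2
def fwd (g : L r) : L r := ![g 4 / r, g 1, g 2, -2*r*g 0 + 3*r*g 3, 2*g 0 + 2*g 3]
def bwd (z : L r) : L r := ![-z 3/(5*r) + 3/10*z 4, z 1, z 2, z 3/(5*r) + z 4/5, r * z 0]

variable (hr : r ≠ 0) in
def lequiv : L r ≃ₗ[ℝ] L r where
  toFun := fwd r
  invFun := bwd r
  map_add' := by
    intro a b; funext i
    fin_cases i <;>
      simp [fwd, show ∀ a b : L r, ∀ j, (a + b) j = a j + b j from fun _ _ _ => rfl] <;> ring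
  map_smul' := by
    intro c a; funext i
    fin_cases i <;>
      simp [fwd, show ∀ (t : ℝ) (a : L r) (j : Fin 5), (t • a) j = t * a j from fun _ _ _ => rfl] <;> ring
  left_inv := by
    intro g; funext i
    fin_cases i <;> simp [fwd, bwd] <;> field_simp <;> ring
  right_inv := by
    intro z; funext i
    fin_cases i <;> simp [fwd, bwd] <;> field_simp <;> ring

variable (hr : r ≠ 0)

def Xb : Module.Basis (Fin 5) ℝ (L r) := (eb r).map (lequiv r hr)

lemma Xb_apply (i : Fin 5) : Xb r hr i = fwd r (eb r i) := by
  simp [Xb, Module.Basis.map_apply, lequiv]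

lemma isH2' :
    ⁅Xb r hr 0, Xb r hr 1⁆ = 0 ∧ ⁅Xb r hr 0, Xb r hr 2⁆ = 0 ∧ ⁅Xb r hr 0, Xb r hr 3⁆ = 0 ∧
    ⁅Xb r hr 0, Xb r hr 4⁆ = (2 : ℝ) • Xb r hr 0 ∧
    ⁅Xb r hr 1, Xb r hr 2⁆ = Xb r hr 0 ∧ ⁅Xb r hr 1, Xb r hr 3⁆ = 0 ∧
    ⁅Xb r hr 1, Xb r hr 4⁆ = Xb r hr 1 ∧
    ⁅Xb r hr 2, Xb r hr 3⁆ = 0 ∧ ⁅Xb r hr 2, Xb r hr 4⁆ = Xb r hr 2 ∧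
    ⁅Xb r hr 3, Xb r hr 4⁆ = (-3 : ℝ) • Xb r hr 3 := by
  refine ⟨?_, ?_, ?_, ?_, ?_, ?_, ?_, ?_, ?_, ?_⟩ <;>
    · funext k
      fin_cases k <;>
        simp [Xb_apply, fwd, eb_apply, lie_def, br,
          show ∀ j, (0 : L r) j = 0 from fun _ => rfl,
          show ∀ (t : ℝ) (a : L r) (j : Fin 5), (t • a) j = t * a j from fun _ _ _ => rfl] <;>
        field_simp <;> ring

section Assembly
variable (r : ℝ)

local notation "ω₁" => bw (eb r) 0 1 + bw (eb r) 2 3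
local notation "ω₂" => bw (eb r) 0 2 - bw (eb r) 1 3
local notation "ω₃" => bw (eb r) 0 3 + bw (eb r) 1 2

lemma d_coord0 (x y : L r) : dOne (⇑((eb r).coord 0)) x y = 0 := by
  simp only [dOne, coord_apply, br_0, neg_zero]
lemma d_coord1 (x y : L r) : dOne (⇑((eb r).coord 1)) x y = (r) * bw (eb r) 0 1 x y := by
  simp only [dOne, coord_apply, br_1, bw_apply]; ring
lemma d_coord2 (x y : L r) : dOne (⇑((eb r).coord 2)) x y = (r) * bw (eb r) 0 2 x y := by
  simp only [dOne, coord_apply, br_2, bw_apply]; ring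
lemma d_coord3 (x y : L r) : dOne (⇑((eb r).coord 3)) x y =
    (-r) * bw (eb r) 0 3 x y + (-3*r^2) * bw (eb r) 0 4 x y + (2*r) * bw (eb r) 1 2 x y := by
  simp only [dOne, coord_apply, br_3, bw_apply]; ring
lemma d_coord4 (x y : L r) : dOne (⇑((eb r).coord 4)) x y =
    (-2) * bw (eb r) 0 3 x y + (-2) * bw (eb r) 1 2 x y := by
  simp only [dOne, coord_apply, br_4, bw_apply]; ring

lemma contact' (x y : L r) : dOne (fun z => ((eb r).coord 4) z) x y =
    -2 * (ω₃) x y := by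
  simp only [dOne, coord_apply, br_4, om3_apply]; ring

set_option maxHeartbeats 1000000 in
lemma closed1' (x y z w : L r) :
    dThree (wedge12 (fun z => ((eb r).coord 4) z) (fun a b => (ω₁) a b)) x y z w = 0 := by
  simp only [dThree, wedge12, coord_apply, om1_apply, br_0, br_1, br_2, br_3, br_4]; ring

set_option maxHeartbeats 1000000 in
lemma closed2' (x y z w : L r) :
    dThree (wedge12 (fun z => ((eb r).coord 4) z) (fun a b => (ω₂) a b)) x y z w = 0 := by
  simp only [dThree, wedge12, coord_apply, om2_apply, br_0, br_1, br_2, br_3, br_4]; ring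

set_option maxHeartbeats 1000000 in
lemma vol22 :
    wedge22 (fun a b => (ω₂) a b) (fun a b => (ω₂) a b)
      = wedge22 (fun a b => (ω₁) a b) (fun a b => (ω₁) a b) := by
  funext x y z w; simp only [wedge22, om1_apply, om2_apply]; ring

set_option maxHeartbeats 1000000 in
lemma vol33 :
    wedge22 (fun a b => (ω₃) a b) (fun a b => (ω₃) a b)
      = wedge22 (fun a b => (ω₁) a b) (fun a b => (ω₁) a b) := by
  funext x y z w; simp only [wedge22, om1_apply, om3_apply]; ring

set_option maxHeartbeats 1000000 in
lemma vol12 :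
    wedge22 (fun a b => (ω₁) a b) (fun a b => (ω₂) a b) = (fun _ _ _ _ => (0:ℝ)) := by
  funext x y z w; simp only [wedge22, om1_apply, om2_apply]; ring

set_option maxHeartbeats 1000000 in
lemma vol13 :
    wedge22 (fun a b => (ω₁) a b) (fun a b => (ω₃) a b) = (fun _ _ _ _ => (0:ℝ)) := by
  funext x y z w; simp only [wedge22, om1_apply, om3_apply]; ring

set_option maxHeartbeats 1000000 in
lemma vol23 :
    wedge22 (fun a b => (ω₂) a b) (fun a b => (ω₃) a b) = (fun _ _ _ _ => (0:ℝ)) := by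
  funext x y z w; simp only [wedge22, om2_apply, om3_apply]; ring

lemma volne :
    wedge41 (wedge22 (fun a b => (ω₁) a b) (fun a b => (ω₁) a b))
      (fun x => ((eb r).coord 4) x) ≠ (fun _ _ _ _ _ => (0:ℝ)) := by
  intro h
  have := congrFun (congrFun (congrFun (congrFun (congrFun h (eb r 0)) (eb r 1))
    (eb r 2)) (eb r 3)) (eb r 4)
  simp only [wedge41, wedge22, om1_apply, coord_apply, eb_apply] at this
  simp at this

lemma compat' (X Y : L r)
    (h : ∀ z, (ω₃) X z = (ω₁) Y z) : 0 ≤ (ω₂) X Y := by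
  have h0 := h (eb r 0); have h1 := h (eb r 1); have h2 := h (eb r 2); have h3 := h (eb r 3)
  simp only [om1_apply, om3_apply, eb_apply] at h0 h1 h2 h3
  simp at h0 h1 h2 h3
  rw [om2_apply, ← h0, ← h1, ← h3, show Y 3 = -X 1 by linarith]
  nlinarith [sq_nonneg (X 0), sq_nonneg (X 1), sq_nonneg (X 2), sq_nonneg (X 3)]

lemma hypo' : IsHypoContact ((eb r).coord 4) (ω₁) (ω₂) (ω₃) := by
  refine ⟨⟨?_, ?_, ?_, ?_, ?_⟩, ?_, ?_, ?_⟩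
  · intro x; rw [om1_apply]; ring
  · intro x; rw [om2_apply]; ring
  · intro x; rw [om3_apply]; ring
  · exact ⟨wedge22 (fun a b => (ω₁) a b) (fun a b => (ω₁) a b),
      rfl, vol22 r, vol33 r, vol12 r, vol13 r, vol23 r, volne r⟩
  · exact compat' r
  · exact contact' r
  · exact closed1' r
  · exact closed2' r

lemma isH2 (hr : r ≠ 0) : IsH2 (L r) := by
  obtain ⟨h1, h2, h3, h4, h5, h6, h7, h8, h9, h10⟩ := isH2' r hr
  exact ⟨Xb r hr, h1, h2, h3, h4, h5, h6, h7, h8, h9, h10⟩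

end Assembly

theorem exists_good_lie_algebra3 (r : ℝ) (hr : r ≠ 0) :
    ∃ (V : Type) (i₁ : LieRing V) (i₂ : @LieAlgebra ℝ V _ i₁),
      @GoodLieAlgebra3 r V i₁ i₂ := by
  refine ⟨L r, inferInstance, inferInstance, solv r, eb r, d_coord0 r, d_coord1 r, d_coord2 r,
    d_coord3 r, d_coord4 r, hypo' r, isH2 r hr⟩

end
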